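/- Let A be a discrete connection form with D-type domain U, s : V → P a section over V ⊆ B, and m_• = (m₀,…,m_N) a sequence in B with (m_{k-1},m_k) ∈ V'' for all k = 1,…,N. Let q_• be the discrete horizontal lift of m_• (with respect to h_A) starting at q₀ ∈ π⁻¹(m₀). Then: (a) there are unique g_k ∈ G with q_k = g_k • s(m_k) for k = 0,…,N; (b) g_k = g_{k-1} · A_s(m_{k-1},m_k)⁻¹ for each k = 1,…,N, and consequently PT(m_•)(g₀ • s(m₀)) = g_N • s(m_N) where g_N = g₀ · ∏_{k=1}^N A_s(m_{k-1},m_k)⁻¹ (ordered product a₁·a₂·⋯·a_N). -/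
import Mathlib


/-- local expression of discrete parallel transport.  If `q_•` is
the discrete horizontal lift (with respect to `h_A`, the horizontal lift of a
discrete connection form `A`) of a sequence `m_• = (m₀,…,m_N)` subordinated to
`V''`, starting at `q₀ ∈ π⁻¹(m₀)`, then: (a) there are unique `g_k ∈ G` with
`q_k = g_k • s(m_k)`; (b) `g_k = g_{k-1} · A_s(m_{k-1},m_k)⁻¹`, so
`PT(m_•)(g₀ • s(m₀)) = g_N • s(m_N)` with
`g_N = g₀ · ∏_{k=1}^N A_s(m_{k-1},m_k)⁻¹` (ordered product). -/
theorem local_expression_of_discrete_parallel_transport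
    {G : Type*} [Group G] {P : Type*} [MulAction G P] {B : Type*}
    (π : P → B)
    (hfree : ∀ (g : G) (q : P), g • q = q → g = 1)
    (hπ : ∀ q₀ q₁ : P, π q₀ = π q₁ ↔ ∃ g : G, g • q₀ = q₁)
    (U : Set (P × P))
    (hUinv : ∀ q₀ q₁ : P, (q₀, q₁) ∈ U → ∀ g₀ g₁ : G, (g₀ • q₀, g₁ • q₁) ∈ U)
    (hUvert : ∀ q₀ q₁ : P, π q₀ = π q₁ → (q₀, q₁) ∈ U)
    (A : P → P → G)
    (hAid : ∀ q : P, A q q = 1)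
    (hAequiv : ∀ q₀ q₁ : P, (q₀, q₁) ∈ U → ∀ g₀ g₁ : G,
      A (g₀ • q₀) (g₁ • q₁) = g₁ * A q₀ q₁ * g₀⁻¹)
    (V : Set B) (s : B → P) (hs : ∀ m ∈ V, π (s m) = m)
    (V'' : Set (B × B))
    (hV'' : V'' = {p : B × B | p.1 ∈ V ∧ p.2 ∈ V ∧ (s p.1, s p.2) ∈ U})
    -- the discrete path `m_•` is subordinated to `V''`
    (N : ℕ) (m : ℕ → B) (hm0V : m 0 ∈ V)
    (hm : ∀ k < N, (m k, m (k + 1)) ∈ V'')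
    -- `q_•` is the discrete horizontal lift of `m_•` with respect to `h_A`,
    -- starting at `q 0 ∈ π⁻¹(m₀)`:
    -- `q (k+1) = h_{A,2}(q k, m (k+1)) = A(q k, q')⁻¹ • q'` for a choice of `q'`
    (q : ℕ → P) (hq0 : π (q 0) = m 0)
    (hlift : ∀ k < N, ∃ q' : P, π q' = m (k + 1) ∧ (q k, q') ∈ U ∧
      q (k + 1) = (A (q k) q')⁻¹ • q') :
    -- (a) unique `g_k` with `q_k = g_k • s(m_k)`
    (∀ k ≤ N, ∃! g : G, q k = g • s (m k)) ∧
    -- (b) the recursion and the resulting parallel transport formula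
    (∀ g : ℕ → G, (∀ k ≤ N, q k = g k • s (m k)) →
      (∀ k < N, g (k + 1) = g k * (A (s (m k)) (s (m (k + 1))))⁻¹) ∧
      g N = g 0 *
        (((List.range N).map (fun k => (A (s (m k)) (s (m (k + 1))))⁻¹)).prod) ∧
      q N = (g 0 *
        (((List.range N).map (fun k => (A (s (m k)) (s (m (k + 1))))⁻¹)).prod))
          • s (m N)) := by
  subst hV''
  -- cancellation from freeness
  have hcancel : ∀ (g g' : G) (p : P), g • p = g' • p → g = g' := by
    intro g g' p h
    have : (g'⁻¹ * g) • p = p := by rw [mul_smul, h, inv_smul_smul]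
    have h2 : g'⁻¹ * g = 1 := hfree _ _ this
    calc g = g' * (g'⁻¹ * g) := by group
      _ = g' := by rw [h2, mul_one]
  -- m k ∈ V for k ≤ N
  have hmV : ∀ k ≤ N, m k ∈ V := by
    intro k hk
    cases k with
    | zero => exact hm0V
    | succ j => exact (hm j (Nat.lt_of_succ_le hk)).2.1
  -- π (q k) = m k for k ≤ N
  have hπq : ∀ k ≤ N, π (q k) = m k := by
    intro k hk
    induction k with
    | zero => exact hq0
    | succ j ih =>
      have hj : j < N := Nat.lt_of_succ_le hk
      obtain ⟨q', hq'π, _, hq'eq⟩ := hlift j hj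
      have : π q' = π (q (j + 1)) := (hπ q' (q (j + 1))).mpr ⟨(A (q j) q')⁻¹, hq'eq.symm⟩
      rw [← this, hq'π]
  -- existence of g_k
  have hex : ∀ k ≤ N, ∃ g : G, q k = g • s (m k) := by
    intro k hk
    have h1 : π (s (m k)) = π (q k) := by rw [hs _ (hmV k hk), hπq k hk]
    obtain ⟨g, hg⟩ := (hπ _ _).mp h1
    exact ⟨g, hg.symm⟩
  constructor
  · intro k hk
    obtain ⟨g, hg⟩ := hex k hk
    exact ⟨g, hg, fun g' hg' => hcancel g' g _ (hg'.symm.trans hg)⟩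
  · intro g hg
    -- the recursion
    have hrec : ∀ k < N, g (k + 1) = g k * (A (s (m k)) (s (m (k + 1))))⁻¹ := by
      intro k hk
      obtain ⟨q', hq'π, hq'U, hq'eq⟩ := hlift k hk
      have hsU : (s (m k), s (m (k + 1))) ∈ U := (hm k hk).2.2
      -- write q' = h • s (m (k+1))
      have h1 : π (s (m (k + 1))) = π q' := by
        rw [hs _ (hmV (k + 1) hk), hq'π]
      obtain ⟨h, hh⟩ := (hπ _ _).mp h1
      have hqk := hg k (le_of_lt hk)
      have hA : A (q k) q' = h * A (s (m k)) (s (m (k + 1))) * (g k)⁻¹ := by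
        rw [hqk, ← hh]; exact hAequiv _ _ hsU _ _
      have : q (k + 1) = (g k * (A (s (m k)) (s (m (k + 1))))⁻¹) • s (m (k + 1)) := by
        rw [hq'eq, hA, ← hh, smul_smul]
        congr 1
        group
      have := (hg (k + 1) hk).symm.trans this
      exact hcancel _ _ _ this
    refine ⟨hrec, ?_, ?_⟩
    · -- product formula, by proving it for all n ≤ N
      have key : ∀ n ≤ N, g n = g 0 *
          (((List.range n).map (fun k => (A (s (m k)) (s (m (k + 1))))⁻¹)).prod) := by
        intro n hn
        induction n with
        | zero => simp
        | succ j ih =>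
          have hj : j < N := Nat.lt_of_succ_le hn
          rw [hrec j hj, ih (le_of_lt hj), List.range_succ, List.map_append,
            List.prod_append]
          simp [mul_assoc]
      exact key N le_rfl
    · have key : ∀ n ≤ N, g n = g 0 *
          (((List.range n).map (fun k => (A (s (m k)) (s (m (k + 1))))⁻¹)).prod) := by
        intro n hn
        induction n with
        | zero => simp
        | succ j ih =>
          have hj : j < N := Nat.lt_of_succ_le hn
          rw [hrec j hj, ih (le_of_lt hj), List.range_succ, List.map_append,
            List.prod_append]
          simp [mul_assoc]
      rw [← key N le_rfl]
      exact hg N le_rfl
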